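/- arXiv:1708.06785 — 2 statements merged into one kernel-verified Lean document; each statement's English description precedes it below -/
import Mathlib

section
/- In the discrete-time dual risk model with delay r ∈ ℕ⁺, the infinite-time Parisian survival probability with zero initial reserve satisfies φ*_r(0) = ∑_{k=0}^∞ (p_0 · P_{−1}(τ⁻ ≤ r, R*_{τ⁻} = k) + p_{k+1}) · φ*_r(k). -/
open MeasureTheory ProbabilityTheory

noncomputable section

variable {Ω : Type*} [MeasurableSpace Ω]

/-- The reserve process of the discrete-time dual risk model with initial capital `u`:
`R*_n = u - n + ∑_{i=1}^n Y_i`. -/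
def reserve (Y : ℕ → Ω → ℕ) (u : ℤ) (n : ℕ) (ω : Ω) : ℤ :=
  u - n + ∑ i ∈ Finset.range n, (Y i ω : ℤ)

/-- The probability mass function of the gain size distribution: `p_k = P(Y_1 = k)`. -/
def gainPMF (μ : Measure Ω) (Y : ℕ → Ω → ℕ) (k : ℕ) : ℝ :=
  (μ {ω | Y 0 ω = k}).toReal

/-- The `n`-fold convolution of the gain size pmf: `p^{*n}_k = P(Y_1 + ⋯ + Y_n = k)`
(with `p^{*0}_k = 1` iff `k = 0`, automatically, since the empty sum is `0`). -/
def conv (μ : Measure Ω) (Y : ℕ → Ω → ℕ) (n k : ℕ) : ℝ :=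
  (μ {ω | ∑ i ∈ Finset.range n, Y i ω = k}).toReal

/-- The gains `(Y_i)` are i.i.d. (and measurable). -/
def IsIID (μ : Measure Ω) (Y : ℕ → Ω → ℕ) : Prop :=
  (∀ i, Measurable (Y i)) ∧
    iIndepFun Y μ ∧ ∀ i, IdentDistrib (Y i) (Y 0) μ μ

/-- Net profit condition: `μ = E[Y_1] > 1` (in particular the mean is finite). -/
def NetProfit (μ : Measure Ω) (Y : ℕ → Ω → ℕ) : Prop :=
  Integrable (fun ω => (Y 0 ω : ℝ)) μ ∧ 1 < ∫ ω, (Y 0 ω : ℝ) ∂μ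

/-- Parisian ruin with delay `r` happens, with the deficit window starting with a
down-crossing (from level `0` to level `-1`) at time `s`: the reserve stays strictly
negative throughout the `r + 1` consecutive periods `s, s+1, …, s+r`. -/
def parisianWindow (Y : ℕ → Ω → ℕ) (u : ℤ) (r s : ℕ) (ω : Ω) : Prop :=
  1 ≤ s ∧ reserve Y u (s - 1) ω = 0 ∧ reserve Y u s ω = -1 ∧
    ∀ m, s ≤ m → m ≤ s + r → reserve Y u m ω < 0

/-- Finite-time Parisian ruin probability `ψ*_r(u,t) = P_u(τ^r < t)`:
the Parisian ruin time `τ^r = s + r` exceeds some down-crossing time `s` by `r`. -/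
def parisianRuinBy (μ : Measure Ω) (Y : ℕ → Ω → ℕ) (u : ℤ) (r t : ℕ) : ℝ :=
  (μ {ω | ∃ s, parisianWindow Y u r s ω ∧ s + r < t}).toReal

/-- Infinite-time Parisian ruin probability `ψ*_r(u) = P_u(τ^r < ∞)`. -/
def parisianRuin (μ : Measure Ω) (Y : ℕ → Ω → ℕ) (u : ℤ) (r : ℕ) : ℝ :=
  (μ {ω | ∃ s, parisianWindow Y u r s ω}).toReal

/-- Infinite-time dual ruin probability `ψ*(u) = P_u(τ* < ∞)`, where
`τ* = inf{n : R*_n = 0}`. -/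
def dualRuinProb (μ : Measure Ω) (Y : ℕ → Ω → ℕ) (u : ℤ) : ℝ :=
  (μ {ω | ∃ n, reserve Y u n ω = 0}).toReal

/-- The event `{τ* = n}` for the dual risk model started at `u`:
the reserve first hits level `0` exactly at time `n`. -/
def dualRuinAt (Y : ℕ → Ω → ℕ) (u : ℤ) (n : ℕ) : Set Ω :=
  {ω | reserve Y u n ω = 0 ∧ ∀ m < n, reserve Y u m ω ≠ 0}

/-- The event `{τ⁻ = n, R*_{τ⁻} = k}` for the process started at `-1`: the recovery
(first return to a non-negative level) happens at time `n` with level `k` at recovery. -/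
def recoveryAt (Y : ℕ → Ω → ℕ) (n k : ℕ) : Set Ω :=
  {ω | reserve Y (-1) n ω = (k : ℤ) ∧ ∀ s < n, reserve Y (-1) s ω < 0}

/-- `P_{-1}(τ⁻ ≤ r, R*_{τ⁻} = k)`: starting from `-1`, recovery happens within `r`
periods, with level `k` at recovery. -/
def recoveryWithinProb (μ : Measure Ω) (Y : ℕ → Ω → ℕ) (r k : ℕ) : ℝ :=
  (μ {ω | ∃ n, 1 ≤ n ∧ n ≤ r ∧ reserve Y (-1) n ω = (k : ℤ) ∧
      ∀ s < n, reserve Y (-1) s ω < 0}).toReal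

/-- Finite-time survival probability `φ(v,t)` of the compound binomial risk process
`R_n = v + n - ∑_{i=1}^n Y_i`. -/
def classicalSurvival (μ : Measure Ω) (Y : ℕ → Ω → ℕ) (v : ℕ) (t : ℕ) : ℝ :=
  (μ {ω | ∀ n < t, 0 < (v : ℤ) + n - ∑ i ∈ Finset.range n, (Y i ω : ℤ)}).toReal
namespace ParisianProof

open MeasureTheory ProbabilityTheory Filter
open scoped ENNReal

variable {Ω : Type*} [MeasurableSpace Ω] {μ : Measure Ω} {Y : ℕ → Ω → ℕ}

/-! ### Cylinder machinery for i.i.d. sequences -/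

/-- `q c = P(Y_0 = c)`. -/
def q (μ : Measure Ω) (Y : ℕ → Ω → ℕ) (c : ℕ) : ℝ≥0∞ := μ {ω | Y 0 ω = c}

lemma point_finset (hY : IsIID μ Y) (s : Finset ℕ) (c : ℕ → ℕ) :
    μ (⋂ i ∈ s, Y i ⁻¹' {c i}) = ∏ i ∈ s, q μ Y (c i) := by
  rw [(iIndepFun_iff_measure_inter_preimage_eq_mul.mp hY.2.1) s
    (fun i _ => measurableSet_singleton _)]
  refine Finset.prod_congr rfl fun i _ => ?_
  rw [(hY.2.2 i).measure_mem_eq (measurableSet_singleton _)]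
  rfl

lemma point (hY : IsIID μ Y) (d a : ℕ) (x : Fin a → ℕ) :
    μ {ω | ∀ i : Fin a, Y (d + (i : ℕ)) ω = x i} = ∏ i : Fin a, q μ Y (x i) := by
  classical
  set c : ℕ → ℕ := fun j => if h : j - d < a then x ⟨j - d, h⟩ else 0 with hc
  have hset : {ω | ∀ i : Fin a, Y (d + (i : ℕ)) ω = x i}
      = ⋂ j ∈ Finset.image (fun i => d + i) (Finset.range a), Y j ⁻¹' {c j} := by
    ext ω
    simp only [Set.mem_setOf_eq, Set.mem_iInter, Finset.mem_image, Finset.mem_range,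
      Set.mem_preimage, Set.mem_singleton_iff]
    constructor
    · rintro h j ⟨i, hi, rfl⟩
      have h2 : d + i - d = i := by omega
      simp only [hc, h2, hi, dif_pos]
      exact h ⟨i, hi⟩
    · intro h i
      have := h (d + i) ⟨i, i.2, rfl⟩
      have h2 : d + (i : ℕ) - d = (i : ℕ) := by omega
      simpa only [hc, h2, i.2, dif_pos] using this
  rw [hset, point_finset hY]
  rw [Finset.prod_image (by intro a _ b _ h; simp only at h; omega)]
  rw [← Fin.prod_univ_eq_prod_range (fun i => q μ Y (c (d + i))) a]
  refine Finset.prod_congr rfl fun i _ => ?_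
  have h2 : d + (i : ℕ) - d = (i : ℕ) := by omega
  simp only [hc, h2, i.2, dif_pos]

lemma measurableSet_point (hY : IsIID μ Y) (d a : ℕ) (x : Fin a → ℕ) :
    MeasurableSet {ω | ∀ i : Fin a, Y (d + (i : ℕ)) ω = x i} := by
  have h : {ω | ∀ i : Fin a, Y (d + (i : ℕ)) ω = x i}
      = ⋂ i : Fin a, (Y (d + (i : ℕ))) ⁻¹' {x i} := by
    ext ω; simp [Set.mem_iInter]
  rw [h]
  exact MeasurableSet.iInter fun i => (hY.1 _) (measurableSet_singleton _)

lemma cyl_eq_iUnion (d a : ℕ) (S : (Fin a → ℕ) → Prop) :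
    {ω | S (fun i => Y (d + (i : ℕ)) ω)}
      = ⋃ x : {x : Fin a → ℕ // S x}, {ω | ∀ i : Fin a, Y (d + (i : ℕ)) ω = x.val i} := by
  ext ω
  simp only [Set.mem_setOf_eq, Set.mem_iUnion]
  constructor
  · intro h
    exact ⟨⟨fun i => Y (d + (i : ℕ)) ω, h⟩, fun i => rfl⟩
  · rintro ⟨x, hx⟩
    have h : (fun i : Fin a => Y (d + (i : ℕ)) ω) = x.val := funext hx
    rw [h]; exact x.2

/-- Master cylinder formula. -/
lemma master (hY : IsIID μ Y) (d a : ℕ) (S : (Fin a → ℕ) → Prop) :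
    μ {ω | S (fun i => Y (d + (i : ℕ)) ω)}
      = ∑' x : {x : Fin a → ℕ // S x}, ∏ i, q μ Y (x.val i) := by
  have hdisj : Pairwise (Function.onFun Disjoint fun x : {x : Fin a → ℕ // S x} =>
      {ω | ∀ i : Fin a, Y (d + (i : ℕ)) ω = x.val i}) := by
    intro x y hxy
    refine Set.disjoint_left.mpr fun ω hx hy => hxy ?_
    ext1
    exact funext fun i => (hx i).symm.trans (hy i)
  rw [cyl_eq_iUnion d a S,
    measure_iUnion hdisj (fun x => measurableSet_point hY d a x.val)]
  exact tsum_congr fun x => point hY d a x.val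

lemma measurableSet_cyl (hY : IsIID μ Y) (d a : ℕ) (S : (Fin a → ℕ) → Prop) :
    MeasurableSet {ω | S (fun i => Y (d + (i : ℕ)) ω)} := by
  rw [cyl_eq_iUnion d a S]
  exact MeasurableSet.iUnion fun x => measurableSet_point hY d a x.val

lemma shiftInvFin (hY : IsIID μ Y) (d d' a : ℕ) (S : (Fin a → ℕ) → Prop) :
    μ {ω | S (fun i => Y (d + (i : ℕ)) ω)} = μ {ω | S (fun i => Y (d' + (i : ℕ)) ω)} := by
  rw [master hY d a S, master hY d' a S]

lemma blockIndepFin (hY : IsIID μ Y) (d a b : ℕ) (S : (Fin a → ℕ) → Prop)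
    (T : (Fin b → ℕ) → Prop) :
    μ ({ω | S (fun i => Y (d + (i : ℕ)) ω)} ∩ {ω | T (fun i => Y (d + a + (i : ℕ)) ω)})
      = μ {ω | S (fun i => Y (d + (i : ℕ)) ω)} * μ {ω | T (fun i => Y (d + (i : ℕ)) ω)} := by
  classical
  set U : (Fin (a + b) → ℕ) → Prop :=
    fun z => S (fun i => z (Fin.castAdd b i)) ∧ T (fun i => z (Fin.natAdd a i)) with hU
  have hset : {ω | S (fun i => Y (d + (i : ℕ)) ω)} ∩ {ω | T (fun i => Y (d + a + (i : ℕ)) ω)}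
      = {ω | U (fun i => Y (d + (i : ℕ)) ω)} := by
    ext ω
    simp only [Set.mem_inter_iff, Set.mem_setOf_eq, hU]
    have e1 : (fun i : Fin a => Y (d + ((Fin.castAdd b i : Fin (a+b)) : ℕ)) ω)
        = fun i : Fin a => Y (d + (i : ℕ)) ω := by
      funext i; simp
    have e2 : (fun i : Fin b => Y (d + ((Fin.natAdd a i : Fin (a+b)) : ℕ)) ω)
        = fun i : Fin b => Y (d + a + (i : ℕ)) ω := by
      funext i
      have h3 : d + ((Fin.natAdd a i : Fin (a + b)) : ℕ) = d + a + (i : ℕ) := by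
        simp only [Fin.coe_natAdd]; omega
      rw [h3]
    rw [e1, e2]
  rw [hset, master hY d _ U, master hY d a S, master hY d b T]
  let e : {z : Fin (a + b) → ℕ // U z} ≃ {x : Fin a → ℕ // S x} × {y : Fin b → ℕ // T y} :=
  { toFun := fun z => (⟨fun i => z.val (Fin.castAdd b i), z.2.1⟩,
      ⟨fun i => z.val (Fin.natAdd a i), z.2.2⟩)
    invFun := fun p => ⟨Fin.append p.1.val p.2.val, by
      constructor
      · have h : (fun i => Fin.append p.1.val p.2.val (Fin.castAdd b i)) = p.1.val := by
          funext i; rw [Fin.append_left]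
        rw [h]; exact p.1.2
      · have h : (fun i => Fin.append p.1.val p.2.val (Fin.natAdd a i)) = p.2.val := by
          funext i; rw [Fin.append_right]
        rw [h]; exact p.2.2⟩
    left_inv := fun z => by
      ext1
      exact Fin.append_castAdd_natAdd
    right_inv := fun p => by
      refine Prod.ext ?_ ?_ <;> ext1 <;> funext i
      · exact Fin.append_left _ _ i
      · exact Fin.append_right _ _ i }
  rw [← e.symm.tsum_eq]
  have hterm : ∀ p : {x : Fin a → ℕ // S x} × {y : Fin b → ℕ // T y},
      (∏ i, q μ Y ((e.symm p).val i))
        = (∏ i, q μ Y (p.1.val i)) * ∏ i, q μ Y (p.2.val i) := by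
    intro p
    have h : (e.symm p).val = Fin.append p.1.val p.2.val := rfl
    rw [h, Fin.prod_univ_add]
    congr 1
    · exact Finset.prod_congr rfl fun i _ => by rw [Fin.append_left]
    · exact Finset.prod_congr rfl fun i _ => by rw [Fin.append_right]
  calc ∑' p, (∏ i, q μ Y ((e.symm p).val i))
      = ∑' (p : {x : Fin a → ℕ // S x} × {y : Fin b → ℕ // T y}),
        (∏ i, q μ Y (p.1.val i)) * ∏ i, q μ Y (p.2.val i) := tsum_congr hterm
    _ = ∑' (x : {x : Fin a → ℕ // S x}), ∑' (y : {y : Fin b → ℕ // T y}),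
        (∏ i, q μ Y (x.val i)) * ∏ i, q μ Y (y.val i) := ENNReal.tsum_prod'
    _ = _ := by
      rw [← ENNReal.tsum_mul_right]
      exact tsum_congr fun x => by rw [ENNReal.tsum_mul_left]

/-! ### Lifting to predicates on `ℕ → ℕ` depending on finitely many coordinates -/

def DependsOn (P : (ℕ → ℕ) → Prop) (a : ℕ) : Prop :=
  ∀ g g' : ℕ → ℕ, (∀ i < a, g i = g' i) → P g → P g'

def truncP (P : (ℕ → ℕ) → Prop) (a : ℕ) : (Fin a → ℕ) → Prop :=
  fun x => P (fun i => if h : i < a then x ⟨i, h⟩ else 0)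

lemma cylNat {P : (ℕ → ℕ) → Prop} {a : ℕ} (hP : DependsOn P a) (d : ℕ) :
    {ω | P (fun i => Y (d + i) ω)}
      = {ω | truncP P a (fun i : Fin a => Y (d + (i : ℕ)) ω)} := by
  ext ω
  simp only [Set.mem_setOf_eq, truncP]
  constructor
  · intro h
    exact hP _ _ (fun i hi => by simp [hi]) h
  · intro h
    exact hP _ _ (fun i hi => by simp [hi]) h

lemma measurableSet_nat (hY : IsIID μ Y) {P : (ℕ → ℕ) → Prop} {a : ℕ}
    (hP : DependsOn P a) (d : ℕ) :
    MeasurableSet {ω | P (fun i => Y (d + i) ω)} := by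
  rw [cylNat hP d]; exact measurableSet_cyl hY d a _

lemma shiftInvNat (hY : IsIID μ Y) {P : (ℕ → ℕ) → Prop} {a : ℕ}
    (hP : DependsOn P a) (d d' : ℕ) :
    μ {ω | P (fun i => Y (d + i) ω)} = μ {ω | P (fun i => Y (d' + i) ω)} := by
  rw [cylNat hP d, cylNat hP d']; exact shiftInvFin hY d d' a _

lemma blockIndepNat (hY : IsIID μ Y) {P Q : (ℕ → ℕ) → Prop} {a b : ℕ}
    (hP : DependsOn P a) (hQ : DependsOn Q b) (d : ℕ) :
    μ ({ω | P (fun i => Y (d + i) ω)} ∩ {ω | Q (fun i => Y (d + a + i) ω)})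
      = μ {ω | P (fun i => Y (d + i) ω)} * μ {ω | Q (fun i => Y (d + i) ω)} := by
  rw [cylNat hP d, cylNat hQ (d + a), cylNat hQ d]
  exact blockIndepFin hY d a b _ _

lemma indep_iInter [IsFiniteMeasure μ] (A : Set Ω) (hA : MeasurableSet A)
    (E : ℕ → Set Ω) (hE : ∀ N, MeasurableSet (E N)) (hmono : Antitone E)
    (c : ℝ≥0∞) (hc : c ≠ ⊤) (h : ∀ N, μ (A ∩ E N) = c * μ (E N)) :
    μ (A ∩ ⋂ N, E N) = c * μ (⋂ N, E N) := by
  have h1 : Tendsto (fun N => μ (E N)) atTop (nhds (μ (⋂ N, E N))) :=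
    tendsto_measure_iInter_atTop (fun N => (hE N).nullMeasurableSet) hmono
      ⟨0, measure_ne_top μ _⟩
  have hAE : A ∩ ⋂ N, E N = ⋂ N, A ∩ E N := by rw [Set.inter_iInter]
  have h2 : Tendsto (fun N => μ (A ∩ E N)) atTop (nhds (μ (A ∩ ⋂ N, E N))) := by
    rw [hAE]
    exact tendsto_measure_iInter_atTop
      (fun N => (hA.inter (hE N)).nullMeasurableSet)
      (fun i j hij => Set.inter_subset_inter le_rfl (hmono hij))
      ⟨0, measure_ne_top μ _⟩
  have h3 : Tendsto (fun N => c * μ (E N)) atTop (nhds (c * μ (⋂ N, E N))) :=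
    ENNReal.Tendsto.const_mul h1 (Or.inr hc)
  have h4 : Tendsto (fun N => μ (A ∩ E N)) atTop (nhds (c * μ (⋂ N, E N))) := by
    simpa only [h] using h3
  exact tendsto_nhds_unique h2 h4

lemma meas_iInter_congr [IsFiniteMeasure μ]
    (E F : ℕ → Set Ω) (hE : ∀ N, MeasurableSet (E N)) (hF : ∀ N, MeasurableSet (F N))
    (hmE : Antitone E) (hmF : Antitone F) (h : ∀ N, μ (E N) = μ (F N)) :
    μ (⋂ N, E N) = μ (⋂ N, F N) := by
  have h1 : Tendsto (fun N => μ (E N)) atTop (nhds (μ (⋂ N, E N))) :=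
    tendsto_measure_iInter_atTop (fun N => (hE N).nullMeasurableSet) hmE
      ⟨0, measure_ne_top μ _⟩
  have h2 : Tendsto (fun N => μ (F N)) atTop (nhds (μ (⋂ N, F N))) :=
    tendsto_measure_iInter_atTop (fun N => (hF N).nullMeasurableSet) hmF
      ⟨0, measure_ne_top μ _⟩
  exact tendsto_nhds_unique (by simpa only [h] using h1) h2

/-! ### Deterministic path predicates -/

def pres (u : ℤ) (g : ℕ → ℕ) (n : ℕ) : ℤ := u - n + ∑ i ∈ Finset.range n, (g i : ℤ)

lemma pres_zero (u : ℤ) (g : ℕ → ℕ) : pres u g 0 = u := by simp [pres]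

lemma pres_one (u : ℤ) (g : ℕ → ℕ) : pres u g 1 = u - 1 + g 0 := by simp [pres]

lemma pres_congr {u : ℤ} {g g' : ℕ → ℕ} {n : ℕ} (h : ∀ i < n, g i = g' i) :
    pres u g n = pres u g' n := by
  unfold pres
  congr 1
  exact Finset.sum_congr rfl fun i hi => by rw [h i (Finset.mem_range.mp hi)]

lemma pres_shift (u : ℤ) (g : ℕ → ℕ) (d m : ℕ) :
    pres u g (d + m) = pres (pres u g d) (fun i => g (d + i)) m := by
  unfold pres
  rw [Finset.sum_range_add]
  push_cast
  ring

def windP (u : ℤ) (r s : ℕ) (g : ℕ → ℕ) : Prop :=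
  1 ≤ s ∧ pres u g (s - 1) = 0 ∧ pres u g s = -1 ∧
    ∀ m, s ≤ m → m ≤ s + r → pres u g m < 0

lemma windP_congr {u : ℤ} {r s : ℕ} {g g' : ℕ → ℕ} (h : ∀ i < s + r, g i = g' i) :
    windP u r s g ↔ windP u r s g' := by
  have hc : ∀ n ≤ s + r, pres u g n = pres u g' n := fun n hn =>
    pres_congr (fun i hi => h i (lt_of_lt_of_le hi hn))
  unfold windP
  constructor
  · rintro ⟨h1, h2, h3, h4⟩
    refine ⟨h1, ?_, ?_, fun m hm hm' => ?_⟩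
    · rw [← hc _ (by omega)]; exact h2
    · rw [← hc _ (by omega)]; exact h3
    · rw [← hc _ hm']; exact h4 m hm hm'
  · rintro ⟨h1, h2, h3, h4⟩
    refine ⟨h1, ?_, ?_, fun m hm hm' => ?_⟩
    · rw [hc _ (by omega)]; exact h2
    · rw [hc _ (by omega)]; exact h3
    · rw [hc _ hm']; exact h4 m hm hm'

lemma windP_shift {u v : ℤ} {g : ℕ → ℕ} {d : ℕ} (hv : pres u g d = v)
    (r t : ℕ) (ht : 1 ≤ t) :
    windP v r t (fun i => g (d + i)) ↔ windP u r (d + t) g := by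
  have hlink : ∀ m, pres u g (d + m) = pres v (fun i => g (d + i)) m := fun m => by
    rw [pres_shift, hv]
  unfold windP
  constructor
  · rintro ⟨h1, h2, h3, h4⟩
    refine ⟨by omega, ?_, ?_, fun m hm hm' => ?_⟩
    · have h5 : d + t - 1 = d + (t - 1) := by omega
      rw [h5, hlink]; exact h2
    · rw [hlink]; exact h3
    · have h5 : m = d + (m - d) := by omega
      rw [h5, hlink]
      exact h4 (m - d) (by omega) (by omega)
  · rintro ⟨h1, h2, h3, h4⟩
    refine ⟨ht, ?_, ?_, fun m hm hm' => ?_⟩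
    · have h5 := hlink (t - 1)
      have h6 : d + (t - 1) = d + t - 1 := by omega
      rw [h6] at h5
      rw [← h5]; exact h2
    · rw [← hlink]; exact h3
    · rw [← hlink]
      exact h4 (d + m) (by omega) (by omega)

def SvN (u : ℤ) (r N : ℕ) (g : ℕ → ℕ) : Prop := ∀ s ≤ N, ¬ windP u r s g

def RecP (n k : ℕ) (g : ℕ → ℕ) : Prop :=
  pres (-1) g n = (k : ℤ) ∧ ∀ s < n, pres (-1) g s < 0

def CP (n k : ℕ) (g : ℕ → ℕ) : Prop := g 0 = 0 ∧ RecP n k (fun i => g (1 + i))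

def P1 (c : ℕ) (g : ℕ → ℕ) : Prop := g 0 = c

lemma dependsOn_SvN (u : ℤ) (r N : ℕ) : DependsOn (SvN u r N) (N + r) := by
  intro g g' h hg s hs hw
  refine hg s hs ?_
  rw [windP_congr (fun i hi => h i (by omega))]
  exact hw

lemma dependsOn_RecP (n k : ℕ) : DependsOn (RecP n k) n := by
  intro g g' h hg
  refine ⟨?_, fun s hs => ?_⟩
  · rw [← pres_congr (fun i hi => h i hi)]; exact hg.1
  · rw [← pres_congr (fun i hi => h i (by omega))]; exact hg.2 s hs

lemma dependsOn_CP (n k : ℕ) : DependsOn (CP n k) (n + 1) := by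
  intro g g' h hg
  refine ⟨by rw [← h 0 (by omega)]; exact hg.1, ?_⟩
  exact dependsOn_RecP n k _ _ (fun i hi => h (1 + i) (by omega)) hg.2

lemma dependsOn_P1 (c : ℕ) : DependsOn (P1 c) 1 := by
  intro g g' h hg
  unfold P1 at *
  rw [← h 0 (by omega)]; exact hg

lemma recP_unique {g : ℕ → ℕ} {n k n' k' : ℕ}
    (h : RecP n k g) (h' : RecP n' k' g) : n = n' ∧ k = k' := by
  rcases lt_trichotomy n n' with hlt | heq | hgt
  · exfalso
    have h1 := h'.2 n hlt
    have h2 := h.1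
    omega
  · subst heq
    have h1 := h.1
    have h2 := h'.1
    exact ⟨rfl, by omega⟩
  · exfalso
    have h1 := h.2 n' hgt
    have h2 := h'.1
    omega

/-- The central pathwise decomposition of the survival event. -/
lemma decomp (r : ℕ) (hr : 1 ≤ r) (g : ℕ → ℕ) :
    (∀ s, ¬ windP 0 r s g) ↔
      ((∃ j, g 0 = j + 1 ∧ ∀ s, ¬ windP (j : ℤ) r s (fun i => g (1 + i))) ∨
       (∃ n k, 1 ≤ n ∧ n ≤ r ∧ g 0 = 0 ∧ RecP n k (fun i => g (1 + i)) ∧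
         ∀ s, ¬ windP (k : ℤ) r s (fun i => g (n + 1 + i)))) := by
  constructor
  · intro hs
    rcases Nat.eq_zero_or_pos (g 0) with hg0 | hg0
    · right
      have hpres1 : pres 0 g 1 = -1 := by rw [pres_one]; omega
      have hlink : ∀ m, pres 0 g (1 + m) = pres (-1) (fun i => g (1 + i)) m := fun m => by
        rw [pres_shift, hpres1]
      have hP : ∃ n, 0 ≤ pres (-1) (fun i => g (1 + i)) n := by
        by_contra hcon
        push_neg at hcon
        apply hs 1
        refine ⟨le_refl 1, ?_, ?_, fun m hm hm' => ?_⟩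
        · simpa using pres_zero 0 g
        · exact hpres1
        · rw [show m = 1 + (m - 1) by omega, hlink]
          exact hcon (m - 1)
      have hex : ∃ n, 0 ≤ pres (-1) (fun i => g (1 + i)) n ∧ n ≤ r := by
        by_contra hcon
        push_neg at hcon
        apply hs 1
        refine ⟨le_refl 1, ?_, ?_, fun m hm hm' => ?_⟩
        · simpa using pres_zero 0 g
        · exact hpres1
        · rw [show m = 1 + (m - 1) by omega, hlink]
          by_contra hge
          push_neg at hge
          exact absurd (hcon (m - 1) hge) (by omega)
      classical
      obtain ⟨w, hw0, hwr⟩ := hex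
      set n := Nat.find hP with hn
      have hspec : 0 ≤ pres (-1) (fun i => g (1 + i)) n := Nat.find_spec hP
      have hmin : ∀ s < n, pres (-1) (fun i => g (1 + i)) s < 0 := fun s hs' => by
        have := Nat.find_min hP hs'
        omega
      have hn1 : 1 ≤ n := by
        rcases Nat.eq_zero_or_pos n with h0 | h1
        · exfalso
          have h2 := hspec
          rw [h0, pres_zero] at h2
          omega
        · exact h1
      have hnr : n ≤ r := le_trans (Nat.find_le hw0) hwr
      set k := (pres (-1) (fun i => g (1 + i)) n).toNat with hkdef
      have hk : pres (-1) (fun i => g (1 + i)) n = (k : ℤ) := by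
        rw [hkdef, Int.toNat_of_nonneg hspec]
      refine ⟨n, k, hn1, hnr, hg0, ⟨hk, hmin⟩, fun t hw => ?_⟩
      have ht : 1 ≤ t := hw.1
      have hv : pres 0 g (n + 1) = (k : ℤ) := by
        rw [show n + 1 = 1 + n by omega, hlink, hk]
      exact hs (n + 1 + t) ((windP_shift hv r t ht).mp hw)
    · left
      refine ⟨g 0 - 1, by omega, fun t hw => ?_⟩
      have ht : 1 ≤ t := hw.1
      have hv : pres 0 g 1 = ((g 0 - 1 : ℕ) : ℤ) := by rw [pres_one]; omega
      exact hs (1 + t) ((windP_shift hv r t ht).mp hw)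
  · rintro (⟨j, hg0, hsv⟩ | ⟨n, k, hn1, hnr, hg0, hrec, hsv⟩) s hw
    · have hs1 : 1 ≤ s := hw.1
      have hv : pres 0 g 1 = (j : ℤ) := by rw [pres_one]; omega
      rcases Nat.eq_or_lt_of_le hs1 with h1 | h2
      · have h3 := hw.2.2.1
        rw [← h1] at h3
        rw [hv] at h3
        omega
      · refine hsv (s - 1) ?_
        have h3 : 1 ≤ s - 1 := by omega
        rw [windP_shift hv r (s - 1) h3, show 1 + (s - 1) = s by omega]
        exact hw
    · have hs1 : 1 ≤ s := hw.1
      have hpres1 : pres 0 g 1 = -1 := by rw [pres_one]; omega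
      have hlink : ∀ m, pres 0 g (1 + m) = pres (-1) (fun i => g (1 + i)) m := fun m => by
        rw [pres_shift, hpres1]
      have hv : pres 0 g (n + 1) = (k : ℤ) := by
        rw [show n + 1 = 1 + n by omega, hlink, hrec.1]
      by_cases hs2 : s ≤ n + 1
      · rcases Nat.eq_or_lt_of_le hs1 with h1 | h2
        · have hneg := hw.2.2.2 (n + 1) (by omega) (by omega)
          rw [hv] at hneg
          omega
        · have h0 := hw.2.1
          rw [show s - 1 = 1 + (s - 2) by omega, hlink] at h0
          have h3 := hrec.2 (s - 2) (by omega)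
          omega
      · refine hsv (s - (n + 1)) ?_
        have h3 : 1 ≤ s - (n + 1) := by omega
        rw [windP_shift hv r (s - (n + 1)) h3, show n + 1 + (s - (n + 1)) = s by omega]
        exact hw

end ParisianProof

namespace ParisianProof

open MeasureTheory ProbabilityTheory Filter
open scoped ENNReal

variable {Ω : Type*} [MeasurableSpace Ω] {μ : Measure Ω} {Y : ℕ → Ω → ℕ}

/-! ### The survival sets -/

def SvSetN (Y : ℕ → Ω → ℕ) (d : ℕ) (u : ℤ) (r N : ℕ) : Set Ω :=
  {ω | SvN u r N (fun i => Y (d + i) ω)}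

def SvSet (Y : ℕ → Ω → ℕ) (d : ℕ) (u : ℤ) (r : ℕ) : Set Ω := ⋂ N, SvSetN Y d u r N

lemma mem_SvSet {d : ℕ} {u : ℤ} {r : ℕ} {ω : Ω} :
    ω ∈ SvSet Y d u r ↔ ∀ s, ¬ windP u r s (fun i => Y (d + i) ω) := by
  constructor
  · intro h s
    exact (Set.mem_iInter.mp h s) s le_rfl
  · intro h
    exact Set.mem_iInter.mpr fun N s _ => h s

lemma antitone_SvSetN (d : ℕ) (u : ℤ) (r : ℕ) : Antitone (SvSetN Y d u r) :=
  fun N N' h ω hω s hs => hω s (le_trans hs h)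

lemma measurableSet_SvSetN (hY : IsIID μ Y) (d : ℕ) (u : ℤ) (r N : ℕ) :
    MeasurableSet (SvSetN Y d u r N) :=
  measurableSet_nat hY (dependsOn_SvN u r N) d

lemma measurableSet_SvSet (hY : IsIID μ Y) (d : ℕ) (u : ℤ) (r : ℕ) :
    MeasurableSet (SvSet Y d u r) :=
  MeasurableSet.iInter fun N => measurableSet_SvSetN hY d u r N

lemma meas_SvSet_shift [IsFiniteMeasure μ] (hY : IsIID μ Y) (d d' : ℕ) (u : ℤ) (r : ℕ) :
    μ (SvSet Y d u r) = μ (SvSet Y d' u r) :=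
  meas_iInter_congr _ _ (fun N => measurableSet_SvSetN hY d u r N)
    (fun N => measurableSet_SvSetN hY d' u r N)
    (antitone_SvSetN d u r) (antitone_SvSetN d' u r)
    (fun N => shiftInvNat hY (dependsOn_SvN u r N) d d')

lemma svSet_compl (u : ℤ) (r : ℕ) :
    SvSet Y 0 u r = {ω | ∃ s, parisianWindow Y u r s ω}ᶜ := by
  ext ω
  rw [Set.mem_compl_iff, mem_SvSet]
  have h0 : (fun i => Y (0 + i) ω) = (fun i => Y i ω) := by funext i; rw [zero_add]
  rw [h0]
  simp only [Set.mem_setOf_eq, not_exists]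
  exact Iff.rfl

/-! ### The decomposition pieces -/

def G1 (Y : ℕ → Ω → ℕ) (r : ℕ) (j : ℕ) : Set Ω :=
  {ω | P1 (j + 1) (fun i => Y (0 + i) ω)} ∩ SvSet Y 1 (j : ℤ) r

def G2 (Y : ℕ → Ω → ℕ) (r : ℕ) (p : ℕ × ℕ) : Set Ω :=
  if 1 ≤ p.1 ∧ p.1 ≤ r then
    {ω | CP p.1 p.2 (fun i => Y (0 + i) ω)} ∩ SvSet Y (p.1 + 1) (p.2 : ℤ) r
  else ∅

lemma mem_G2_elim {r : ℕ} {p : ℕ × ℕ} {ω : Ω} (h : ω ∈ G2 Y r p) :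
    (1 ≤ p.1 ∧ p.1 ≤ r) ∧ CP p.1 p.2 (fun i => Y (0 + i) ω)
      ∧ ω ∈ SvSet Y (p.1 + 1) (p.2 : ℤ) r := by
  unfold G2 at h
  split_ifs at h with hc
  · exact ⟨hc, h.1, h.2⟩
  · exact absurd h (Set.notMem_empty ω)

lemma svSet_union (r : ℕ) (hr : 1 ≤ r) :
    SvSet Y 0 0 r = (⋃ j, G1 Y r j) ∪ ⋃ p : ℕ × ℕ, G2 Y r p := by
  ext ω
  have h0 : (fun i => Y (0 + i) ω) = (fun i => Y i ω) := by funext i; rw [zero_add]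
  constructor
  · intro hω
    have hsv : ∀ s, ¬ windP 0 r s (fun i => Y i ω) := by
      have h := mem_SvSet.mp hω; rwa [h0] at h
    rcases (decomp r hr (fun i => Y i ω)).mp hsv with
      ⟨j, hg0, hsv'⟩ | ⟨n, k, hn1, hnr, hg0, hrec, hsv'⟩
    · refine Or.inl (Set.mem_iUnion.mpr ⟨j, ?_, mem_SvSet.mpr hsv'⟩)
      show P1 (j + 1) (fun i => Y (0 + i) ω)
      unfold P1
      rw [h0]
      exact hg0
    · refine Or.inr (Set.mem_iUnion.mpr ⟨(n, k), ?_⟩)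
      show ω ∈ G2 Y r (n, k)
      unfold G2
      rw [if_pos (⟨hn1, hnr⟩ : 1 ≤ (n, k).1 ∧ (n, k).1 ≤ r)]
      refine ⟨?_, mem_SvSet.mpr hsv'⟩
      show CP n k (fun i => Y (0 + i) ω)
      unfold CP
      rw [h0]
      exact ⟨hg0, hrec⟩
  · intro hω
    refine mem_SvSet.mpr ?_
    rw [h0]
    refine (decomp r hr (fun i => Y i ω)).mpr ?_
    rcases hω with h | h
    · obtain ⟨j, h1, h2⟩ := Set.mem_iUnion.mp h
      refine Or.inl ⟨j, ?_, mem_SvSet.mp h2⟩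
      have h1' : P1 (j + 1) (fun i => Y (0 + i) ω) := h1
      unfold P1 at h1'
      rwa [h0] at h1'
    · obtain ⟨p, hp⟩ := Set.mem_iUnion.mp h
      obtain ⟨hc, hcp, hsv2⟩ := mem_G2_elim hp
      refine Or.inr ⟨p.1, p.2, hc.1, hc.2, ?_, ?_, mem_SvSet.mp hsv2⟩
      · have h1' := hcp.1
        rwa [h0] at h1'
      · have h2' := hcp.2
        rwa [h0] at h2'

/-! ### Disjointness -/

lemma G1_disjoint (r : ℕ) : Pairwise (Function.onFun Disjoint (G1 Y r)) := by
  intro j j' hne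
  refine Set.disjoint_left.mpr fun ω h1 h2 => hne ?_
  have a1 : Y (0 + 0) ω = j + 1 := h1.1
  have a2 : Y (0 + 0) ω = j' + 1 := h2.1
  omega

lemma G2_disjoint (r : ℕ) : Pairwise (Function.onFun Disjoint (G2 Y r)) := by
  intro p p' hne
  refine Set.disjoint_left.mpr fun ω h1 h2 => hne ?_
  have a1 := (mem_G2_elim h1).2.1.2
  have a2 := (mem_G2_elim h2).2.1.2
  obtain ⟨e1, e2⟩ := recP_unique a1 a2
  exact Prod.ext e1 e2

lemma G1_G2_disjoint (r : ℕ) : Disjoint (⋃ j, G1 Y r j) (⋃ p : ℕ × ℕ, G2 Y r p) := by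
  refine Set.disjoint_left.mpr fun ω h1 h2 => ?_
  obtain ⟨j, hj⟩ := Set.mem_iUnion.mp h1
  obtain ⟨p, hp⟩ := Set.mem_iUnion.mp h2
  have a1 : Y (0 + 0) ω = j + 1 := hj.1
  have a2 : Y (0 + 0) ω = 0 := (mem_G2_elim hp).2.1.1
  omega

/-! ### Measurability of pieces -/

lemma measurableSet_G1 (hY : IsIID μ Y) (r j : ℕ) : MeasurableSet (G1 Y r j) :=
  (measurableSet_nat hY (dependsOn_P1 (j + 1)) 0).inter (measurableSet_SvSet hY 1 (j : ℤ) r)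

lemma measurableSet_G2 (hY : IsIID μ Y) (r : ℕ) (p : ℕ × ℕ) : MeasurableSet (G2 Y r p) := by
  unfold G2
  split_ifs with hc
  · exact (measurableSet_nat hY (dependsOn_CP p.1 p.2) 0).inter
      (measurableSet_SvSet hY (p.1 + 1) (p.2 : ℤ) r)
  · exact MeasurableSet.empty

/-! ### Measures of the pieces -/

lemma q_eq (c : ℕ) : μ {ω | P1 c (fun i => Y (0 + i) ω)} = q μ Y c := by
  have hs : {ω | P1 c (fun i => Y (0 + i) ω)} = {ω | Y 0 ω = c} := by
    ext ω; simp only [P1, Set.mem_setOf_eq, zero_add]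
  rw [hs]; rfl

lemma meas_G1 [IsProbabilityMeasure μ] (hY : IsIID μ Y) (r j : ℕ) :
    μ (G1 Y r j) = q μ Y (j + 1) * μ (SvSet Y 0 (j : ℤ) r) := by
  have key : ∀ N, μ ({ω | P1 (j + 1) (fun i => Y (0 + i) ω)} ∩ SvSetN Y 1 (j : ℤ) r N)
      = q μ Y (j + 1) * μ (SvSetN Y 1 (j : ℤ) r N) := by
    intro N
    have hE : SvSetN Y 1 (j : ℤ) r N
        = {ω | SvN (j : ℤ) r N (fun i => Y (0 + 1 + i) ω)} := by
      ext ω; simp only [SvSetN, Set.mem_setOf_eq, zero_add]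
    rw [hE, blockIndepNat hY (dependsOn_P1 (j + 1)) (dependsOn_SvN (j : ℤ) r N) 0,
      q_eq, shiftInvNat hY (dependsOn_SvN (j : ℤ) r N) 0 1]
  have h := indep_iInter (μ := μ) _ (measurableSet_nat hY (dependsOn_P1 (j + 1)) 0)
    (SvSetN Y 1 (j : ℤ) r) (fun N => measurableSet_SvSetN hY 1 (j : ℤ) r N)
    (antitone_SvSetN 1 (j : ℤ) r) (q μ Y (j + 1)) (measure_ne_top μ _) key
  calc μ (G1 Y r j) = q μ Y (j + 1) * μ (SvSet Y 1 (j : ℤ) r) := h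
    _ = q μ Y (j + 1) * μ (SvSet Y 0 (j : ℤ) r) := by
        rw [meas_SvSet_shift hY 1 0 (j : ℤ) r]

lemma meas_G2 [IsProbabilityMeasure μ] (hY : IsIID μ Y) (r : ℕ) (p : ℕ × ℕ) :
    μ (G2 Y r p) = if 1 ≤ p.1 ∧ p.1 ≤ r then
      q μ Y 0 * μ {ω | RecP p.1 p.2 (fun i => Y (0 + i) ω)} * μ (SvSet Y 0 (p.2 : ℤ) r)
    else 0 := by
  obtain ⟨n, k⟩ := p
  unfold G2
  by_cases hc : 1 ≤ (n, k).1 ∧ (n, k).1 ≤ r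
  · rw [if_pos hc, if_pos hc]
    have key : ∀ N, μ ({ω | CP n k (fun i => Y (0 + i) ω)} ∩ SvSetN Y (n + 1) (k : ℤ) r N)
        = μ {ω | CP n k (fun i => Y (0 + i) ω)} * μ (SvSetN Y (n + 1) (k : ℤ) r N) := by
      intro N
      have hE : SvSetN Y (n + 1) (k : ℤ) r N
          = {ω | SvN (k : ℤ) r N (fun i => Y (0 + (n + 1) + i) ω)} := by
        ext ω; simp only [SvSetN, Set.mem_setOf_eq, zero_add]
      rw [hE, blockIndepNat hY (dependsOn_CP n k) (dependsOn_SvN (k : ℤ) r N) 0,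
        shiftInvNat hY (dependsOn_SvN (k : ℤ) r N) 0 (n + 1), ← hE]
      rfl
    have h := indep_iInter (μ := μ) _ (measurableSet_nat hY (dependsOn_CP n k) 0)
      (SvSetN Y (n + 1) (k : ℤ) r) (fun N => measurableSet_SvSetN hY (n + 1) (k : ℤ) r N)
      (antitone_SvSetN (n + 1) (k : ℤ) r) (μ {ω | CP n k (fun i => Y (0 + i) ω)})
      (measure_ne_top μ _) key
    have hA : μ {ω | CP n k (fun i => Y (0 + i) ω)}
        = q μ Y 0 * μ {ω | RecP n k (fun i => Y (0 + i) ω)} := by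
      have hAs : {ω | CP n k (fun i => Y (0 + i) ω)}
          = {ω | P1 0 (fun i => Y (0 + i) ω)} ∩ {ω | RecP n k (fun i => Y (0 + 1 + i) ω)} := by
        ext ω
        simp only [CP, P1, Set.mem_setOf_eq, Set.mem_inter_iff, zero_add]
      rw [hAs, blockIndepNat hY (dependsOn_P1 0) (dependsOn_RecP n k) 0, q_eq]
    calc μ ({ω | CP n k (fun i => Y (0 + i) ω)} ∩ SvSet Y (n + 1) (k : ℤ) r)
        = μ {ω | CP n k (fun i => Y (0 + i) ω)} * μ (SvSet Y (n + 1) (k : ℤ) r) := h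
      _ = q μ Y 0 * μ {ω | RecP n k (fun i => Y (0 + i) ω)} * μ (SvSet Y 0 (k : ℤ) r) := by
          rw [hA, meas_SvSet_shift hY (n + 1) 0 (k : ℤ) r, mul_assoc]
  · rw [if_neg hc, if_neg hc]
    exact measure_empty

/-! ### Recovery probability -/

lemma recSet_eq (n k : ℕ) :
    {ω | RecP n k (fun i => Y (0 + i) ω)}
      = {ω | reserve Y (-1) n ω = (k : ℤ) ∧ ∀ s < n, reserve Y (-1) s ω < 0} := by
  ext ω
  simp only [RecP, Set.mem_setOf_eq, zero_add]
  exact Iff.rfl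

lemma recovery_sum [IsProbabilityMeasure μ] (hY : IsIID μ Y) (r k : ℕ) :
    μ {ω | ∃ n, 1 ≤ n ∧ n ≤ r ∧ reserve Y (-1) n ω = (k : ℤ) ∧
        ∀ s < n, reserve Y (-1) s ω < 0}
      = ∑ n ∈ Finset.Icc 1 r, μ {ω | RecP n k (fun i => Y (0 + i) ω)} := by
  have hU : {ω : Ω | ∃ n, 1 ≤ n ∧ n ≤ r ∧ reserve Y (-1) n ω = (k : ℤ) ∧
        ∀ s < n, reserve Y (-1) s ω < 0}
      = ⋃ n ∈ Finset.Icc 1 r, {ω | RecP n k (fun i => Y (0 + i) ω)} := by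
    ext ω
    simp only [Set.mem_setOf_eq, Set.mem_iUnion, Finset.mem_Icc, recSet_eq,
      exists_prop]
    constructor
    · rintro ⟨n, h1, h2, h3, h4⟩
      exact ⟨n, ⟨h1, h2⟩, h3, h4⟩
    · rintro ⟨n, ⟨h1, h2⟩, h3, h4⟩
      exact ⟨n, h1, h2, h3, h4⟩
  rw [hU]
  refine measure_biUnion_finset ?_ (fun n _ => measurableSet_nat hY (dependsOn_RecP n k) 0)
  intro n _ n' _ hne
  refine Set.disjoint_left.mpr fun ω h1 h2 => hne ?_
  exact (recP_unique h1 h2).1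

end ParisianProof

namespace ParisianProof

open MeasureTheory ProbabilityTheory Filter
open scoped ENNReal

variable {Ω : Type*} [MeasurableSpace Ω] {μ : Measure Ω} {Y : ℕ → Ω → ℕ}

lemma q_ne_top [IsProbabilityMeasure μ] (c : ℕ) : q μ Y c ≠ ⊤ := measure_ne_top μ _

lemma main_ennreal [IsProbabilityMeasure μ] (hY : IsIID μ Y) (r : ℕ) (hr : 1 ≤ r) :
    μ (SvSet Y 0 0 r)
      = ∑' k : ℕ, ((q μ Y 0 * ∑ n ∈ Finset.Icc 1 r, μ {ω | RecP n k (fun i => Y (0 + i) ω)})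
          + q μ Y (k + 1)) * μ (SvSet Y 0 (k : ℤ) r) := by
  rw [svSet_union r hr (Y := Y)]
  rw [measure_union (G1_G2_disjoint r) (MeasurableSet.iUnion fun p => measurableSet_G2 hY r p)]
  rw [measure_iUnion (G1_disjoint r) (fun j => measurableSet_G1 hY r j)]
  rw [measure_iUnion (G2_disjoint r) (fun p => measurableSet_G2 hY r p)]
  have h1 : ∑' j : ℕ, μ (G1 Y r j) = ∑' j : ℕ, q μ Y (j + 1) * μ (SvSet Y 0 (j : ℤ) r) :=
    tsum_congr fun j => meas_G1 hY r j
  have h2 : ∑' p : ℕ × ℕ, μ (G2 Y r p)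
      = ∑' k : ℕ, (q μ Y 0 * ∑ n ∈ Finset.Icc 1 r, μ {ω | RecP n k (fun i => Y (0 + i) ω)})
          * μ (SvSet Y 0 (k : ℤ) r) := by
    have e1 : ∑' p : ℕ × ℕ, μ (G2 Y r p)
        = ∑' n : ℕ, ∑' k : ℕ, μ (G2 Y r (n, k)) := ENNReal.tsum_prod'
    rw [e1, ENNReal.tsum_comm]
    refine tsum_congr fun k => ?_
    have e2 : ∀ n : ℕ, μ (G2 Y r (n, k)) = if 1 ≤ n ∧ n ≤ r then
        q μ Y 0 * μ {ω | RecP n k (fun i => Y (0 + i) ω)} * μ (SvSet Y 0 (k : ℤ) r)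
      else 0 := fun n => meas_G2 hY r (n, k)
    calc ∑' n : ℕ, μ (G2 Y r (n, k))
        = ∑ n ∈ Finset.Icc 1 r, μ (G2 Y r (n, k)) := by
          refine tsum_eq_sum fun n hn => ?_
          rw [e2 n, if_neg (by simpa [Finset.mem_Icc] using hn)]
      _ = ∑ n ∈ Finset.Icc 1 r,
          q μ Y 0 * μ {ω | RecP n k (fun i => Y (0 + i) ω)} * μ (SvSet Y 0 (k : ℤ) r) := by
          refine Finset.sum_congr rfl fun n hn => ?_
          rw [e2 n, if_pos (by simpa [Finset.mem_Icc] using hn)]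
      _ = (q μ Y 0 * ∑ n ∈ Finset.Icc 1 r, μ {ω | RecP n k (fun i => Y (0 + i) ω)})
          * μ (SvSet Y 0 (k : ℤ) r) := by
          rw [← Finset.sum_mul, ← Finset.mul_sum]
  rw [h1, h2, ← ENNReal.tsum_add]
  refine tsum_congr fun k => ?_
  rw [add_mul]
  ring

lemma one_sub_ruin [IsProbabilityMeasure μ] (hY : IsIID μ Y) (r : ℕ) (u : ℤ) :
    1 - parisianRuin μ Y u r = (μ (SvSet Y 0 u r)).toReal := by
  have hmeas : MeasurableSet {ω | ∃ s, parisianWindow Y u r s ω} := by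
    have h : {ω | ∃ s, parisianWindow Y u r s ω} = (SvSet Y 0 u r)ᶜ := by
      rw [svSet_compl, compl_compl]
    rw [h]
    exact (measurableSet_SvSet hY 0 u r).compl
  have hcomp : μ (SvSet Y 0 u r) = 1 - μ {ω | ∃ s, parisianWindow Y u r s ω} := by
    rw [svSet_compl]
    exact prob_compl_eq_one_sub hmeas
  have h2 : (μ (SvSet Y 0 u r)).toReal
      = 1 - (μ {ω | ∃ s, parisianWindow Y u r s ω}).toReal := by
    rw [hcomp, ENNReal.toReal_sub_of_le prob_le_one ENNReal.one_ne_top, ENNReal.toReal_one]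
  rw [h2]
  rfl

end ParisianProof

/-- The infinite-time Parisian survival probability with zero initial reserve satisfies
`φ*_r(0) = ∑_{k=0}^∞ (p_0 P_{-1}(τ⁻ ≤ r, R*_{τ⁻} = k) + p_{k+1}) φ*_r(k)`. -/
theorem parisian_survival_zero_reserve
    (μ : Measure Ω) [IsProbabilityMeasure μ] (Y : ℕ → Ω → ℕ) (hY : IsIID μ Y)
    (hnet : NetProfit μ Y) (r : ℕ) (hr : 1 ≤ r) :
    1 - parisianRuin μ Y 0 r
      = ∑' k : ℕ, (gainPMF μ Y 0 * recoveryWithinProb μ Y r k + gainPMF μ Y (k + 1))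
          * (1 - parisianRuin μ Y (k : ℤ) r) := by
  classical
  have hσeq := ParisianProof.one_sub_ruin (μ := μ) hY r
  have hrec : ∀ k, recoveryWithinProb μ Y r k
      = (∑ n ∈ Finset.Icc 1 r,
          μ {ω | ParisianProof.RecP n k (fun i => Y (0 + i) ω)}).toReal := by
    intro k
    unfold recoveryWithinProb
    rw [ParisianProof.recovery_sum hY r k]
  have hgain : ∀ c, gainPMF μ Y c = (ParisianProof.q μ Y c).toReal := fun c => rfl
  have hRfin : ∀ k, (∑ n ∈ Finset.Icc 1 r,
      μ {ω | ParisianProof.RecP n k (fun i => Y (0 + i) ω)}) ≠ ⊤ := fun k =>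
    ENNReal.sum_ne_top.mpr fun n _ => measure_ne_top μ _
  have hfin : ∀ k, ((ParisianProof.q μ Y 0 * ∑ n ∈ Finset.Icc 1 r,
        μ {ω | ParisianProof.RecP n k (fun i => Y (0 + i) ω)})
          + ParisianProof.q μ Y (k + 1)) * μ (ParisianProof.SvSet Y 0 (k : ℤ) r) ≠ ⊤ :=
    fun k => ENNReal.mul_ne_top
      (ENNReal.add_ne_top.mpr
        ⟨ENNReal.mul_ne_top (ParisianProof.q_ne_top 0) (hRfin k), ParisianProof.q_ne_top (k + 1)⟩)
      (measure_ne_top μ _)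
  have hterm : ∀ k : ℕ,
      (gainPMF μ Y 0 * recoveryWithinProb μ Y r k + gainPMF μ Y (k + 1))
          * (1 - parisianRuin μ Y (k : ℤ) r)
        = (((ParisianProof.q μ Y 0 * ∑ n ∈ Finset.Icc 1 r,
            μ {ω | ParisianProof.RecP n k (fun i => Y (0 + i) ω)})
          + ParisianProof.q μ Y (k + 1)) * μ (ParisianProof.SvSet Y 0 (k : ℤ) r)).toReal := by
    intro k
    rw [hσeq (k : ℤ), hrec k, hgain 0, hgain (k + 1)]
    rw [ENNReal.toReal_mul, ENNReal.toReal_add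
      (ENNReal.mul_ne_top (ParisianProof.q_ne_top 0) (hRfin k)) (ParisianProof.q_ne_top (k + 1)),
      ENNReal.toReal_mul]
  calc 1 - parisianRuin μ Y 0 r
      = (μ (ParisianProof.SvSet Y 0 0 r)).toReal := hσeq 0
    _ = (∑' k : ℕ, ((ParisianProof.q μ Y 0 * ∑ n ∈ Finset.Icc 1 r,
            μ {ω | ParisianProof.RecP n k (fun i => Y (0 + i) ω)})
          + ParisianProof.q μ Y (k + 1)) * μ (ParisianProof.SvSet Y 0 (k : ℤ) r)).toReal := by
        rw [ParisianProof.main_ennreal hY r hr]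
    _ = ∑' k : ℕ, (((ParisianProof.q μ Y 0 * ∑ n ∈ Finset.Icc 1 r,
            μ {ω | ParisianProof.RecP n k (fun i => Y (0 + i) ω)})
          + ParisianProof.q μ Y (k + 1)) * μ (ParisianProof.SvSet Y 0 (k : ℤ) r)).toReal :=
        ENNReal.tsum_toReal_eq hfin
    _ = ∑' k : ℕ, (gainPMF μ Y 0 * recoveryWithinProb μ Y r k + gainPMF μ Y (k + 1))
          * (1 - parisianRuin μ Y (k : ℤ) r) := tsum_congr fun k => (hterm k).symm
end
end

section
/- In the discrete-time dual risk model with Binomial/Geometric gains with parameters b ∈ (0, 1] and q ∈ (0, 1) satisfying b + q > 1, the infinite-time dual ruin probability is ψ*(u) = ((1 − b)/q)^u for every u ∈ ℕ. -/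
open MeasureTheory ProbabilityTheory

noncomputable section

variable {Ω : Type*} [MeasurableSpace Ω]

open scoped ENNReal NNReal

namespace BGDual

def res (u : ℤ) (v : ℕ → ℕ) (n : ℕ) : ℤ := u - n + ∑ i ∈ Finset.range n, (v i : ℤ)

lemma res_congr {u : ℤ} {v w : ℕ → ℕ} {n : ℕ} (h : ∀ i < n, v i = w i) {m : ℕ} (hm : m ≤ n) :
    res u v m = res u w m := by
  unfold res
  congr 1
  exact Finset.sum_congr rfl fun i hi => by
    rw [h i (lt_of_lt_of_le (Finset.mem_range.mp hi) hm)]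

lemma res_zero (u : ℤ) (v : ℕ → ℕ) : res u v 0 = u := by simp [res]

lemma res_succ (u : ℤ) (v : ℕ → ℕ) (n : ℕ) : res u v (n + 1) = res u v n - 1 + v n := by
  simp [res, Finset.sum_range_succ]; ring

lemma res_ge_one {u : ℤ} (hu : 1 ≤ u) (v : ℕ → ℕ) {n : ℕ}
    (h : ∀ m ≤ n, res u v m ≠ 0) : 1 ≤ res u v n := by
  induction n with
  | zero => rw [res_zero]; exact hu
  | succ n ih =>
    have h1 := ih fun m hm => h m (hm.trans (Nat.le_succ n))
    have h2 := h (n + 1) le_rfl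
    have h3 := res_succ u v n
    have h4 : (0:ℤ) ≤ (v n : ℤ) := Int.natCast_nonneg _
    omega

open Classical in
noncomputable def pay (r : ℝ≥0∞) (u : ℤ) (n : ℕ) (v : ℕ → ℕ) : ℝ≥0∞ :=
  if ∃ m ≤ n, res u v m = 0 then 1 else r ^ (res u v n).toNat

lemma pay_congr (r : ℝ≥0∞) (u : ℤ) {n : ℕ} {v w : ℕ → ℕ} (h : ∀ i < n, v i = w i) :
    pay r u n v = pay r u n w := by
  unfold pay
  have h1 : (∃ m ≤ n, res u v m = 0) ↔ (∃ m ≤ n, res u w m = 0) := by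
    constructor
    · rintro ⟨m, hm, h0⟩; exact ⟨m, hm, by rw [← res_congr h hm]; exact h0⟩
    · rintro ⟨m, hm, h0⟩; exact ⟨m, hm, by rw [res_congr h hm]; exact h0⟩
  rw [if_congr h1 rfl (by rw [res_congr h le_rfl])]

lemma pay_le_one {r : ℝ≥0∞} (hr : r ≤ 1) (u : ℤ) (n : ℕ) (v : ℕ → ℕ) : pay r u n v ≤ 1 := by
  unfold pay; split
  · exact le_rfl
  · exact pow_le_one' hr _

lemma pay_succ (r : ℝ≥0∞) {u : ℤ} (hu : 1 ≤ u) (n : ℕ) (v : ℕ → ℕ) :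
    pay r u (n + 1) v
      = if ∃ m ≤ n, res u v m = 0 then 1 else r ^ ((res u v n).toNat - 1 + v n) := by
  unfold pay
  by_cases h : ∃ m ≤ n, res u v m = 0
  · rw [if_pos h, if_pos]
    obtain ⟨m, hm, h0⟩ := h
    exact ⟨m, hm.trans (Nat.le_succ n), h0⟩
  · rw [if_neg h]
    push_neg at h
    have h1 : 1 ≤ res u v n := res_ge_one hu v h
    have hs := res_succ u v n
    have h4 : (0:ℤ) ≤ (v n : ℤ) := Int.natCast_nonneg _
    have hc : (∃ m ≤ n + 1, res u v m = 0) ↔ res u v (n + 1) = 0 := by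
      constructor
      · rintro ⟨m, hm, h0⟩
        by_cases hm' : m ≤ n
        · exact absurd h0 (h m hm')
        · have : m = n + 1 := by omega
          subst this; exact h0
      · exact fun h0 => ⟨n + 1, le_rfl, h0⟩
    by_cases h2 : res u v (n + 1) = 0
    · rw [if_pos (hc.mpr h2)]
      have : (res u v n).toNat - 1 + v n = 0 := by omega
      rw [this, pow_zero]
    · rw [if_neg fun hx => h2 (hc.mp hx)]
      congr 1
      omega

def ex (n : ℕ) (w : Fin n → ℕ) : ℕ → ℕ := fun i => if h : i < n then w ⟨i, h⟩ else 0

noncomputable def FF (r : ℝ≥0∞) (u : ℤ) (n : ℕ) (w : Fin n → ℕ) : ℝ≥0∞ := pay r u n (ex n w)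

end BGDual

/-- **Lemma 3 (Binomial/Geometric model).** With `P(Y_1 = 0) = 1 - b` and
`P(Y_1 = k) = b q^{k-1} (1-q)` for `k ≥ 1`, where `b ∈ (0,1]`, `q ∈ (0,1)` and `b + q > 1`,
the infinite-time dual ruin probability is `ψ*(u) = ((1-b)/q)^u`. -/
theorem binom_geom_dual_ruin
    (μ : Measure Ω) [IsProbabilityMeasure μ] (Y : ℕ → Ω → ℕ) (hY : IsIID μ Y)
    (b q : ℝ) (hb : b ∈ Set.Ioc (0 : ℝ) 1) (hq : q ∈ Set.Ioo (0 : ℝ) 1) (hnp : 1 < b + q)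
    (h0 : μ {ω | Y 0 ω = 0} = ENNReal.ofReal (1 - b))
    (hk : ∀ k : ℕ, 1 ≤ k → μ {ω | Y 0 ω = k} = ENNReal.ofReal (b * q ^ (k - 1) * (1 - q)))
    (u : ℕ) :
    dualRuinProb μ Y (u : ℤ) = ((1 - b) / q) ^ u := by
  classical
  obtain ⟨hb0, hb1⟩ := hb
  obtain ⟨hq0, hq1⟩ := hq
  obtain ⟨hmeas, hindep, hident⟩ := hY
  -- measurability of the reserve
  have hmres : ∀ n, Measurable fun ω => reserve Y (u : ℤ) n ω := by
    intro n
    simp only [reserve]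
    exact measurable_const.add
      (Finset.measurable_sum _ fun i _ => measurable_from_nat.comp (hmeas i))
  set A : Set Ω := {ω | ∃ n, reserve Y (u : ℤ) n ω = 0} with hA_def
  have hAmeas : MeasurableSet A := by
    have : A = ⋃ n, (fun ω => reserve Y (u : ℤ) n ω) ⁻¹' {0} := by
      ext ω; simp [hA_def]
    rw [this]
    exact MeasurableSet.iUnion fun n => (hmres n) (measurableSet_singleton 0)
  -- trivial case u = 0
  rcases Nat.eq_zero_or_pos u with rfl | hupos
  · have hAall : A = Set.univ := Set.eq_univ_of_forall fun ω => ⟨0, by simp [reserve]⟩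
    unfold dualRuinProb
    rw [← hA_def, hAall]
    simp
  have huz : (1 : ℤ) ≤ (u : ℤ) := by exact_mod_cast hupos
  -- the parameters
  set ρ : ℝ := (1 - b) / q with hρ_def
  have hρ0 : 0 ≤ ρ := div_nonneg (by linarith) hq0.le
  have hρ1 : ρ < 1 := (div_lt_one hq0).mpr (by linarith)
  have hρq : ρ * q = 1 - b := div_mul_cancel₀ _ (ne_of_gt hq0)
  set p : ℕ → ℝ := fun k => if k = 0 then 1 - b else b * q ^ (k - 1) * (1 - q) with hp_def
  have hp0 : ∀ k, 0 ≤ p k := by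
    intro k
    by_cases hk0 : k = 0
    · simp only [hp_def, hk0, if_pos rfl]; linarith
    · simp only [hp_def, if_neg hk0]
      exact mul_nonneg (mul_nonneg hb0.le (pow_nonneg hq0.le _)) (by linarith)
  have hpY : ∀ k, μ {ω | Y 0 ω = k} = ENNReal.ofReal (p k) := by
    intro k
    cases k with
    | zero => simpa [hp_def] using h0
    | succ m => simpa [hp_def] using hk (m + 1) (Nat.succ_le_succ (Nat.zero_le m))
  -- series identities
  have hgeo_sum : Summable fun k : ℕ => q ^ k := summable_geometric_of_lt_one hq0.le hq1
  have hsucc_eq : ∀ k : ℕ, p (k + 1) = b * q ^ k * (1 - q) := fun k => by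
    simp [hp_def]
  have hsump1 : Summable fun k => p (k + 1) := by
    refine ((hgeo_sum.mul_left b).mul_right (1 - q)).congr fun k => ?_
    rw [hsucc_eq]
  have hsump : Summable p := (summable_nat_add_iff 1).mp hsump1
  have htsum1 : (∑' k, p k) = 1 := by
    rw [Summable.tsum_eq_zero_add hsump]
    have h1 : (∑' k, p (k + 1)) = b := by
      calc (∑' k, p (k + 1)) = ∑' k, (b * q ^ k) * (1 - q) := tsum_congr fun k => by
            rw [hsucc_eq]
        _ = (∑' k, b * q ^ k) * (1 - q) := tsum_mul_right
        _ = (b * (1 - q)⁻¹) * (1 - q) := by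
            rw [tsum_mul_left, tsum_geometric_of_lt_one hq0.le hq1]
        _ = b := inv_mul_cancel_right₀ (by linarith : (1:ℝ) - q ≠ 0) b
    rw [h1]
    simp [hp_def]
  have hsum2 : Summable fun k => ρ ^ k * p k :=
    hsump.of_nonneg_of_le (fun k => mul_nonneg (pow_nonneg hρ0 _) (hp0 k))
      (fun k => mul_le_of_le_one_left (hp0 k) (pow_le_one₀ hρ0 hρ1.le))
  have htsum2 : (∑' k, ρ ^ k * p k) = ρ := by
    rw [Summable.tsum_eq_zero_add hsum2]
    have h1 : ∀ k : ℕ, ρ ^ (k + 1) * p (k + 1) = (ρ * b * (1 - q)) * (ρ * q) ^ k := by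
      intro k
      rw [hsucc_eq, pow_succ, mul_pow]
      ring
    rw [tsum_congr h1, tsum_mul_left,
      tsum_geometric_of_lt_one (by rw [hρq]; linarith) (by rw [hρq]; linarith)]
    rw [hρq]
    have hb' : b ≠ 0 := ne_of_gt hb0
    have : (1 : ℝ) - (1 - b) = b := by ring
    rw [this, pow_zero, one_mul]
    rw [show p 0 = 1 - b from by simp [hp_def], ← hρq]
    field_simp
    ring
  -- ENNReal versions
  set ρ' : ℝ≥0∞ := ENNReal.ofReal ρ with hρ'_def
  have hρ'le : ρ' ≤ 1 := by rw [hρ'_def]; exact ENNReal.ofReal_le_one.mpr hρ1.le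
  have hρ'lt : ρ' < 1 := by rw [hρ'_def]; exact ENNReal.ofReal_lt_one.mpr hρ1
  have hE1 : (∑' k : ℕ, ENNReal.ofReal (p k)) = 1 := by
    rw [← ENNReal.ofReal_tsum_of_nonneg hp0 hsump, htsum1, ENNReal.ofReal_one]
  have hE2 : (∑' k : ℕ, ρ' ^ k * ENNReal.ofReal (p k)) = ρ' := by
    have h1 : ∀ k : ℕ, ρ' ^ k * ENNReal.ofReal (p k) = ENNReal.ofReal (ρ ^ k * p k) := by
      intro k
      rw [ENNReal.ofReal_mul (pow_nonneg hρ0 _), ENNReal.ofReal_pow hρ0, hρ'_def]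
    rw [tsum_congr h1, ← ENNReal.ofReal_tsum_of_nonneg
      (fun k => mul_nonneg (pow_nonneg hρ0 _) (hp0 k)) hsum2, htsum2, hρ'_def]
  -- cylinder sets
  have hcylinder : ∀ (n : ℕ) (w : Fin n → ℕ),
      μ ((fun ω (i : Fin n) => Y i ω) ⁻¹' {w}) = ∏ i : Fin n, ENNReal.ofReal (p (w i)) := by
    intro n w
    have hset : ((fun ω (i : Fin n) => Y i ω) ⁻¹' {w})
        = ⋂ i ∈ Finset.range n, Y i ⁻¹' {BGDual.ex n w i} := by
      ext ω
      simp only [Set.mem_preimage, Set.mem_singleton_iff, funext_iff, Set.mem_iInter,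
        Finset.mem_range]
      constructor
      · intro h i hi
        simp only [BGDual.ex, dif_pos hi]
        exact h ⟨i, hi⟩
      · intro h i
        have h2 := h i.1 i.2
        simpa only [BGDual.ex, dif_pos i.2, Fin.eta] using h2
    rw [hset, hindep.measure_inter_preimage_eq_mul (Finset.range n)
      (fun i _ => measurableSet_singleton (BGDual.ex n w i))]
    have h3 : ∀ i ∈ Finset.range n,
        μ (Y i ⁻¹' {BGDual.ex n w i}) = ENNReal.ofReal (p (BGDual.ex n w i)) := by
      intro i _
      rw [(hident i).measure_mem_eq (measurableSet_singleton _)]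
      exact hpY (BGDual.ex n w i)
    rw [Finset.prod_congr rfl h3,
      ← Fin.prod_univ_eq_prod_range (fun i => ENNReal.ofReal (p (BGDual.ex n w i))) n]
    exact Finset.prod_congr rfl fun i _ => by
      simp only [BGDual.ex, dif_pos i.2, Fin.eta]
  -- lintegral of functions of finitely many coordinates
  have hlint : ∀ (n : ℕ) (F : (Fin n → ℕ) → ℝ≥0∞),
      (∫⁻ ω, F (fun i => Y i ω) ∂μ)
        = ∑' w : Fin n → ℕ, F w * ∏ i : Fin n, ENNReal.ofReal (p (w i)) := by
    intro n F
    have hT : Measurable fun ω (i : Fin n) => Y i ω :=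
      measurable_pi_lambda _ fun i => hmeas i
    rw [← lintegral_map (measurable_of_countable F) hT, lintegral_countable']
    exact tsum_congr fun w => by
      rw [Measure.map_apply hT (measurableSet_singleton w), hcylinder n w]
  -- the stopped payoff process
  set f : ℕ → Ω → ℝ≥0∞ := fun n ω => BGDual.FF ρ' (u : ℤ) n (fun i => Y i ω) with hf_def
  have hfpay : ∀ n ω, f n ω = BGDual.pay ρ' (u : ℤ) n (fun i => Y i ω) := by
    intro n ω
    rw [hf_def]
    exact BGDual.pay_congr ρ' (u : ℤ) fun i hi => by simp only [BGDual.ex, dif_pos hi]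
  have hresres : ∀ n ω, BGDual.res (u : ℤ) (fun i => Y i ω) n = reserve Y (u : ℤ) n ω :=
    fun n ω => rfl
  -- constant expectation
  have hI : ∀ n, (∫⁻ ω, f n ω ∂μ) = ρ' ^ u := by
    intro n
    induction n with
    | zero =>
      have h1 : ∀ ω, f 0 ω = ρ' ^ u := by
        intro ω
        have hne : ¬∃ m ≤ 0, BGDual.res (u : ℤ) (fun i => Y i ω) m = 0 := by
          rintro ⟨m, hm, hres0⟩
          have hm0 : m = 0 := Nat.le_zero.mp hm
          subst hm0
          rw [BGDual.res_zero] at hres0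
          omega
        rw [hfpay, BGDual.pay, if_neg hne, BGDual.res_zero, Int.toNat_natCast]
      simp only [h1]
      rw [lintegral_const, measure_univ, mul_one]
    | succ n ih =>
      have hstep : ∀ (w : Fin n → ℕ) (k : ℕ),
          BGDual.FF ρ' (u : ℤ) (n + 1) ((Fin.snoc w k : Fin (n + 1) → ℕ))
            = if ∃ m ≤ n, BGDual.res (u : ℤ) (BGDual.ex n w) m = 0 then 1
              else ρ' ^ ((BGDual.res (u : ℤ) (BGDual.ex n w) n).toNat - 1 + k) := by
        intro w k
        have hagree : ∀ i < n, BGDual.ex (n + 1) ((Fin.snoc w k : Fin (n + 1) → ℕ)) i = BGDual.ex n w i := by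
          intro i hi
          simp only [BGDual.ex, dif_pos hi, dif_pos (Nat.lt_succ_of_lt hi)]
          have hcast : (⟨i, Nat.lt_succ_of_lt hi⟩ : Fin (n + 1)) = Fin.castSucc ⟨i, hi⟩ := rfl
          rw [hcast, Fin.snoc_castSucc]
        have hlastv : BGDual.ex (n + 1) ((Fin.snoc w k : Fin (n + 1) → ℕ)) n = k := by
          simp only [BGDual.ex, dif_pos (Nat.lt_succ_self n)]
          have hcast : (⟨n, Nat.lt_succ_self n⟩ : Fin (n + 1)) = Fin.last n := rfl
          rw [hcast, Fin.snoc_last]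
        have hres2 : ∀ m ≤ n, BGDual.res (u : ℤ) (BGDual.ex (n + 1) ((Fin.snoc w k : Fin (n + 1) → ℕ))) m
            = BGDual.res (u : ℤ) (BGDual.ex n w) m :=
          fun m hm => BGDual.res_congr hagree hm
        rw [BGDual.FF, BGDual.pay_succ ρ' huz n _]
        have hcnd : (∃ m ≤ n, BGDual.res (u : ℤ) (BGDual.ex (n + 1) ((Fin.snoc w k : Fin (n + 1) → ℕ))) m = 0)
            ↔ (∃ m ≤ n, BGDual.res (u : ℤ) (BGDual.ex n w) m = 0) := by
          constructor
          · rintro ⟨m, hm, hr0⟩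
            rw [hres2 m hm] at hr0
            exact ⟨m, hm, hr0⟩
          · rintro ⟨m, hm, hr0⟩
            rw [← hres2 m hm] at hr0
            exact ⟨m, hm, hr0⟩
        rw [if_congr hcnd rfl (by rw [hres2 n le_rfl, hlastv])]
      have hinner : ∀ w : Fin n → ℕ,
          (∑' k : ℕ, BGDual.FF ρ' (u : ℤ) (n + 1) ((Fin.snoc w k : Fin (n + 1) → ℕ))
              * ∏ i : Fin (n + 1), ENNReal.ofReal (p ((Fin.snoc w k : Fin (n + 1) → ℕ) i)))
            = BGDual.FF ρ' (u : ℤ) n w * ∏ i : Fin n, ENNReal.ofReal (p (w i)) := by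
        intro w
        have hprod : ∀ k : ℕ, (∏ i : Fin (n + 1), ENNReal.ofReal (p ((Fin.snoc w k : Fin (n + 1) → ℕ) i)))
            = (∏ i : Fin n, ENNReal.ofReal (p (w i))) * ENNReal.ofReal (p k) := by
          intro k
          rw [Fin.prod_univ_castSucc]
          simp only [Fin.snoc_castSucc, Fin.snoc_last]
        by_cases hC : ∃ m ≤ n, BGDual.res (u : ℤ) (BGDual.ex n w) m = 0
        · have hFn : BGDual.FF ρ' (u : ℤ) n w = 1 := by
            rw [BGDual.FF, BGDual.pay, if_pos hC]
          calc (∑' k : ℕ, BGDual.FF ρ' (u : ℤ) (n + 1) ((Fin.snoc w k : Fin (n + 1) → ℕ))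
                  * ∏ i : Fin (n + 1), ENNReal.ofReal (p ((Fin.snoc w k : Fin (n + 1) → ℕ) i)))
              = ∑' k : ℕ, (∏ i : Fin n, ENNReal.ofReal (p (w i))) * ENNReal.ofReal (p k) := by
                refine tsum_congr fun k => ?_
                rw [hstep w k, if_pos hC, one_mul, hprod k]
            _ = (∏ i : Fin n, ENNReal.ofReal (p (w i))) * ∑' k : ℕ, ENNReal.ofReal (p k) :=
                ENNReal.tsum_mul_left
            _ = BGDual.FF ρ' (u : ℤ) n w * ∏ i : Fin n, ENNReal.ofReal (p (w i)) := by
                rw [hE1, hFn, mul_one, one_mul]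
        · have h1 : 1 ≤ BGDual.res (u : ℤ) (BGDual.ex n w) n := by
            push_neg at hC
            exact BGDual.res_ge_one huz _ hC
          have hFn : BGDual.FF ρ' (u : ℤ) n w
              = ρ' ^ (BGDual.res (u : ℤ) (BGDual.ex n w) n).toNat := by
            rw [BGDual.FF, BGDual.pay, if_neg hC]
          have ha : (BGDual.res (u : ℤ) (BGDual.ex n w) n).toNat
              = ((BGDual.res (u : ℤ) (BGDual.ex n w) n).toNat - 1) + 1 := by omega
          calc (∑' k : ℕ, BGDual.FF ρ' (u : ℤ) (n + 1) ((Fin.snoc w k : Fin (n + 1) → ℕ))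
                  * ∏ i : Fin (n + 1), ENNReal.ofReal (p ((Fin.snoc w k : Fin (n + 1) → ℕ) i)))
              = ∑' k : ℕ, (ρ' ^ ((BGDual.res (u : ℤ) (BGDual.ex n w) n).toNat - 1)
                  * (∏ i : Fin n, ENNReal.ofReal (p (w i))))
                  * (ρ' ^ k * ENNReal.ofReal (p k)) := by
                refine tsum_congr fun k => ?_
                rw [hstep w k, if_neg hC, hprod k, pow_add]
                ring
            _ = (ρ' ^ ((BGDual.res (u : ℤ) (BGDual.ex n w) n).toNat - 1)
                  * (∏ i : Fin n, ENNReal.ofReal (p (w i))))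
                  * ∑' k : ℕ, ρ' ^ k * ENNReal.ofReal (p k) := ENNReal.tsum_mul_left
            _ = BGDual.FF ρ' (u : ℤ) n w * ∏ i : Fin n, ENNReal.ofReal (p (w i)) := by
                rw [hE2, hFn]
                have h5 : ρ' ^ (BGDual.res (u : ℤ) (BGDual.ex n w) n).toNat
                    = ρ' ^ ((BGDual.res (u : ℤ) (BGDual.ex n w) n).toNat - 1) * ρ' := by
                  conv_lhs => rw [ha]
                  rw [pow_succ]
                rw [h5]
                ring
      calc (∫⁻ ω, f (n + 1) ω ∂μ)
          = ∑' w : Fin (n + 1) → ℕ, BGDual.FF ρ' (u : ℤ) (n + 1) w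
              * ∏ i : Fin (n + 1), ENNReal.ofReal (p (w i)) :=
            hlint (n + 1) (BGDual.FF ρ' (u : ℤ) (n + 1))
        _ = ∑' x : ℕ × (Fin n → ℕ), BGDual.FF ρ' (u : ℤ) (n + 1) ((Fin.snoc x.2 x.1 : Fin (n + 1) → ℕ))
              * ∏ i : Fin (n + 1), ENNReal.ofReal (p ((Fin.snoc x.2 x.1 : Fin (n + 1) → ℕ) i)) :=
            ((Fin.snocEquiv (fun _ => ℕ)).tsum_eq _).symm
        _ = ∑' k : ℕ, ∑' w : Fin n → ℕ, BGDual.FF ρ' (u : ℤ) (n + 1) ((Fin.snoc w k : Fin (n + 1) → ℕ))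
              * ∏ i : Fin (n + 1), ENNReal.ofReal (p ((Fin.snoc w k : Fin (n + 1) → ℕ) i)) :=
            ENNReal.tsum_prod (f := fun (k : ℕ) (w : Fin n → ℕ) =>
              BGDual.FF ρ' (u : ℤ) (n + 1) ((Fin.snoc w k : Fin (n + 1) → ℕ))
              * ∏ i : Fin (n + 1), ENNReal.ofReal (p ((Fin.snoc w k : Fin (n + 1) → ℕ) i)))
        _ = ∑' w : Fin n → ℕ, ∑' k : ℕ, BGDual.FF ρ' (u : ℤ) (n + 1) ((Fin.snoc w k : Fin (n + 1) → ℕ))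
              * ∏ i : Fin (n + 1), ENNReal.ofReal (p ((Fin.snoc w k : Fin (n + 1) → ℕ) i)) := ENNReal.tsum_comm
        _ = ∑' w : Fin n → ℕ, BGDual.FF ρ' (u : ℤ) n w
              * ∏ i : Fin n, ENNReal.ofReal (p (w i)) := tsum_congr hinner
        _ = ∫⁻ ω, f n ω ∂μ := (hlint n (BGDual.FF ρ' (u : ℤ) n)).symm
        _ = ρ' ^ u := ih
  -- integrability and mean of Y 0
  set X : ℕ → Ω → ℝ := fun i ω => (Y i ω : ℝ) with hX_def
  have hXmeas : ∀ i, Measurable (X i) := fun i => measurable_from_nat.comp (hmeas i)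
  have hq' : |q| < 1 := by rw [abs_of_pos hq0]; exact hq1
  have hsum_kq : Summable fun k : ℕ => (k : ℝ) * q ^ k := by
    refine (summable_pow_mul_geometric_of_norm_lt_one 1 hq').congr fun k => ?_
    rw [pow_one]
  have htsum_kq : (∑' k : ℕ, (k : ℝ) * q ^ k) = q / (1 - q) ^ 2 :=
    tsum_coe_mul_geometric_of_norm_lt_one hq'
  have hsum_mean1 : Summable fun k : ℕ => ((k : ℝ) + 1) * p (k + 1) := by
    refine ((hsum_kq.mul_left (b * (1 - q))).add (hgeo_sum.mul_left (b * (1 - q)))).congr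
      fun k => ?_
    rw [hsucc_eq]
    push_cast
    ring
  have hsum_mean : Summable fun k : ℕ => (k : ℝ) * p k := by
    apply (summable_nat_add_iff 1).mp
    refine hsum_mean1.congr fun k => ?_
    push_cast
    ring
  have htsum_mean : (∑' k : ℕ, (k : ℝ) * p k) = b / (1 - q) := by
    rw [Summable.tsum_eq_zero_add hsum_mean]
    simp only [Nat.cast_zero, zero_mul, zero_add]
    have hcongr : ∀ k : ℕ, ((k : ℕ) + 1 : ℝ) * p (k + 1)
        = (b * (1 - q)) * ((k : ℝ) * q ^ k) + (b * (1 - q)) * q ^ k := by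
      intro k
      rw [hsucc_eq]
      push_cast
      ring
    calc (∑' k : ℕ, (((k + 1 : ℕ)) : ℝ) * p (k + 1))
        = ∑' k : ℕ, ((b * (1 - q)) * ((k : ℝ) * q ^ k) + (b * (1 - q)) * q ^ k) := by
          refine tsum_congr fun k => ?_
          push_cast
          rw [hcongr k]
      _ = (b * (1 - q)) * (q / (1 - q) ^ 2) + (b * (1 - q)) * (1 - q)⁻¹ := by
          rw [Summable.tsum_add (hsum_kq.mul_left _) (hgeo_sum.mul_left _), tsum_mul_left,
            tsum_mul_left, htsum_kq, tsum_geometric_of_lt_one hq0.le hq1]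
      _ = b / (1 - q) := by
          have h1q : (1 : ℝ) - q ≠ 0 := by linarith
          field_simp
          ring
  have hmean_lint : (∫⁻ ω, ((Y 0 ω : ℕ) : ℝ≥0∞) ∂μ) = ENNReal.ofReal (b / (1 - q)) := by
    rw [← lintegral_map (measurable_from_nat (f := fun k : ℕ => (k : ℝ≥0∞))) (hmeas 0),
      lintegral_countable']
    have h1 : ∀ k : ℕ, (k : ℝ≥0∞) * (μ.map (Y 0)) {k} = ENNReal.ofReal ((k : ℝ) * p k) := by
      intro k
      rw [Measure.map_apply (hmeas 0) (measurableSet_singleton k)]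
      have h2 : (Y 0 ⁻¹' {k}) = {ω | Y 0 ω = k} := rfl
      rw [h2, hpY k, ← ENNReal.ofReal_natCast k,
        ← ENNReal.ofReal_mul (Nat.cast_nonneg k)]
    rw [tsum_congr h1, ← ENNReal.ofReal_tsum_of_nonneg
      (fun k => mul_nonneg (Nat.cast_nonneg k) (hp0 k)) hsum_mean, htsum_mean]
  have hint : Integrable (X 0) μ := by
    refine ⟨(hXmeas 0).aestronglyMeasurable, ?_⟩
    rw [hasFiniteIntegral_iff_ofReal (Filter.Eventually.of_forall fun ω => Nat.cast_nonneg _)]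
    have h1 : (fun ω => ENNReal.ofReal (X 0 ω)) = fun ω => ((Y 0 ω : ℕ) : ℝ≥0∞) :=
      funext fun ω => ENNReal.ofReal_natCast _
    rw [h1, hmean_lint]
    exact ENNReal.ofReal_lt_top
  have hmean : (∫ ω, X 0 ω ∂μ) = b / (1 - q) := by
    rw [integral_eq_lintegral_of_nonneg_ae
      (Filter.Eventually.of_forall fun ω => Nat.cast_nonneg _) (hXmeas 0).aestronglyMeasurable]
    have h1 : (fun ω => ENNReal.ofReal (X 0 ω)) = fun ω => ((Y 0 ω : ℕ) : ℝ≥0∞) :=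
      funext fun ω => ENNReal.ofReal_natCast _
    rw [h1, hmean_lint, ENNReal.toReal_ofReal (div_nonneg hb0.le (by linarith))]
  have hmean1 : 1 < ∫ ω, X 0 ω ∂μ := by
    rw [hmean, lt_div_iff₀ (by linarith : (0:ℝ) < 1 - q)]
    linarith
  -- strong law of large numbers
  have hslln := strong_law_ae_real X hint
    (fun i j hij => (hindep.indepFun hij).comp measurable_from_nat measurable_from_nat)
    (fun i => (hident i).comp measurable_from_nat)
  -- a.e. the reserve tends to infinity
  have hres_top : ∀ᵐ ω ∂μ, Filter.Tendsto (fun n => (reserve Y (u : ℤ) n ω).toNat)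
      Filter.atTop Filter.atTop := by
    filter_upwards [hslln] with ω hω
    have h1 : Filter.Tendsto
        (fun n : ℕ => ((∑ i ∈ Finset.range n, X i ω) / n - 1) * n + (u : ℝ))
        Filter.atTop Filter.atTop := by
      apply Filter.tendsto_atTop_add_const_right
      exact Filter.Tendsto.pos_mul_atTop (by linarith) (hω.sub_const 1) tendsto_natCast_atTop_atTop
    have h2 : ∀ᶠ n : ℕ in Filter.atTop,
        ((∑ i ∈ Finset.range n, X i ω) / n - 1) * n + (u : ℝ)
          = ((reserve Y (u : ℤ) n ω : ℤ) : ℝ) := by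
      filter_upwards [Filter.eventually_gt_atTop 0] with n hn
      have hn' : (n : ℝ) ≠ 0 := Nat.cast_ne_zero.mpr hn.ne'
      have h3 : ((reserve Y (u : ℤ) n ω : ℤ) : ℝ)
          = (u : ℝ) - n + ∑ i ∈ Finset.range n, X i ω := by
        simp only [reserve, hX_def]
        push_cast
        ring
      rw [h3]
      field_simp
      ring
    have h3 : Filter.Tendsto (fun n => ((reserve Y (u : ℤ) n ω : ℤ) : ℝ))
        Filter.atTop Filter.atTop := Filter.Tendsto.congr' h2 h1
    rw [Filter.tendsto_atTop]
    intro N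
    filter_upwards [Filter.tendsto_atTop.mp h3 (N : ℝ)] with n hn
    have h4 : (N : ℤ) ≤ reserve Y (u : ℤ) n ω := by exact_mod_cast hn
    omega
  -- a.e. pointwise convergence of the stopped payoff
  have hlimae : ∀ᵐ ω ∂μ, Filter.Tendsto (fun n => f n ω) Filter.atTop
      (nhds (A.indicator (1 : Ω → ℝ≥0∞) ω)) := by
    filter_upwards [hres_top] with ω hω
    by_cases hωA : ω ∈ A
    · rw [Set.indicator_of_mem hωA]
      obtain ⟨n₀, hn₀⟩ := hωA
      simp only [Pi.one_apply]
      refine Filter.Tendsto.congr' ?_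
        (tendsto_const_nhds : Filter.Tendsto (fun _ : ℕ => (1 : ℝ≥0∞)) Filter.atTop (nhds 1))
      filter_upwards [Filter.eventually_ge_atTop n₀] with n hn
      rw [hfpay, BGDual.pay, if_pos ⟨n₀, hn, hn₀⟩]
    · rw [Set.indicator_of_notMem hωA]
      have hnever : ∀ n, ¬∃ m ≤ n, BGDual.res (u : ℤ) (fun i => Y i ω) m = 0 := by
        rintro n ⟨m, _, hm0⟩
        exact hωA ⟨m, hm0⟩
      have heq : ∀ n, f n ω = ρ' ^ (reserve Y (u : ℤ) n ω).toNat := by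
        intro n
        rw [hfpay, BGDual.pay, if_neg (hnever n)]
        rfl
      rw [funext heq]
      exact (ENNReal.tendsto_pow_atTop_nhds_zero_of_lt_one hρ'lt).comp hω
  -- dominated convergence
  have hfmeas : ∀ n, Measurable (f n) := fun n =>
    (measurable_of_countable (BGDual.FF ρ' (u : ℤ) n)).comp
      (measurable_pi_lambda _ fun i => hmeas i)
  have hbound : ∀ n, ∀ᵐ ω ∂μ, f n ω ≤ (fun _ => (1 : ℝ≥0∞)) ω := fun n =>
    Filter.Eventually.of_forall fun ω => by
      rw [hfpay]
      exact BGDual.pay_le_one hρ'le _ _ _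
  have hdct := tendsto_lintegral_of_dominated_convergence (fun _ => (1 : ℝ≥0∞))
    hfmeas hbound (by simp) hlimae
  rw [funext hI] at hdct
  have hlim_eq : (∫⁻ ω, A.indicator (1 : Ω → ℝ≥0∞) ω ∂μ) = ρ' ^ u :=
    tendsto_nhds_unique hdct tendsto_const_nhds
  rw [lintegral_indicator_one hAmeas] at hlim_eq
  -- conclusion
  unfold dualRuinProb
  rw [← hA_def, hlim_eq, hρ'_def, ← ENNReal.ofReal_pow hρ0,
    ENNReal.toReal_ofReal (pow_nonneg hρ0 u)]
end
end
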